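/- Let n ≥ 1 and let T_n ⊆ ℝ^{n(n−1)/2} be the set of vectors q = (q_{ij})_{1≤i<j≤n} such that: q_{ij} ≥ 0 for all i < j; q_{ij} ≤ q_{ik} + q_{jk} for all distinct i, j, k (with q indexed by unordered pairs); and for all distinct i, j, k, l, the maximum among the three sums q_{ij}+q_{kl}, q_{ik}+q_{jl}, q_{il}+q_{jk} is attained at least twice. Then the convex hull of T_n equals the cut cone Cut_n, i.e., the set of all nonnegative linear combinations of the cut vectors δ(S) for S ⊆ {1,…,n}. -/
import Mathlib


/-- The cut vector of a subset S of {1, ..., n}. -/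
def cutVec {n : ℕ} (S : Finset (Fin n)) : Fin n → Fin n → ℝ :=
  fun i j => if (i ∈ S) ↔ (j ∈ S) then 0 else 1

/-- The set T_n of tree metrics on n points, encoded as symmetric functions with zero
diagonal: entries are nonnegative, satisfy the triangle inequality, and the four-point
condition (the maximum of the three pairings is attained at least twice). -/
def treeMetricSet (n : ℕ) : Set (Fin n → Fin n → ℝ) :=
  {q | (∀ i j, q i j = q j i) ∧ (∀ i, q i i = 0) ∧
    (∀ i j, i ≠ j → 0 ≤ q i j) ∧
    (∀ i j k : Fin n, i ≠ j → i ≠ k → j ≠ k → q i j ≤ q i k + q j k) ∧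
    (∀ i j k l : Fin n, i ≠ j → i ≠ k → i ≠ l → j ≠ k → j ≠ l → k ≠ l →
      (q i j + q k l = q i k + q j l ∧ q i l + q j k ≤ q i j + q k l) ∨
      (q i j + q k l = q i l + q j k ∧ q i k + q j l ≤ q i j + q k l) ∨
      (q i k + q j l = q i l + q j k ∧ q i j + q k l ≤ q i k + q j l))}

namespace TreeDecomp

variable {n : ℕ}

lemma cutVec_symm (S : Finset (Fin n)) (i j : Fin n) : cutVec S i j = cutVec S j i := by
  by_cases hi : i ∈ S <;> by_cases hj : j ∈ S <;> simp [cutVec, hi, hj]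

lemma cutVec_diag (S : Finset (Fin n)) (i : Fin n) : cutVec S i i = 0 := by simp [cutVec]

lemma cutVec_nonneg (S : Finset (Fin n)) (i j : Fin n) : 0 ≤ cutVec S i j := by
  unfold cutVec; split <;> norm_num

lemma cutVec_congr {S T : Finset (Fin n)} {i j k l : Fin n}
    (h1 : i ∈ S ↔ k ∈ T) (h2 : j ∈ S ↔ l ∈ T) : cutVec S i j = cutVec T k l := by
  unfold cutVec
  rw [if_congr (iff_congr h1 h2) rfl rfl]

lemma cutVec_singleton {x a b : Fin n} (hab : a ≠ b) :
    cutVec {x} a b = (if a = x then (1:ℝ) else 0) + (if b = x then 1 else 0) := by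
  by_cases ha : a = x <;> by_cases hb : b = x <;>
    simp [cutVec, ha, hb] <;> simp_all

def TreeOn (V : Finset (Fin n)) (d : Fin n → Fin n → ℝ) : Prop :=
  (∀ i j, d i j = d j i) ∧ (∀ i, d i i = 0) ∧
  (∀ i ∈ V, ∀ j ∈ V, i ≠ j → 0 ≤ d i j) ∧
  (∀ i ∈ V, ∀ j ∈ V, ∀ k ∈ V, i ≠ j → i ≠ k → j ≠ k → d i j ≤ d i k + d j k) ∧
  (∀ i ∈ V, ∀ j ∈ V, ∀ k ∈ V, ∀ l ∈ V, i ≠ j → i ≠ k → i ≠ l → j ≠ k → j ≠ l → k ≠ l →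
    (d i j + d k l = d i k + d j l ∧ d i l + d j k ≤ d i j + d k l) ∨
    (d i j + d k l = d i l + d j k ∧ d i k + d j l ≤ d i j + d k l) ∨
    (d i k + d j l = d i l + d j k ∧ d i j + d k l ≤ d i k + d j l))

lemma TreeOn.mono {V W : Finset (Fin n)} {d : Fin n → Fin n → ℝ} (h : TreeOn V d)
    (hWV : W ⊆ V) : TreeOn W d := by
  obtain ⟨h1, h2, h3, h4, h5⟩ := h
  exact ⟨h1, h2,
    fun i hi j hj => h3 i (hWV hi) j (hWV hj),
    fun i hi j hj k hk => h4 i (hWV hi) j (hWV hj) k (hWV hk),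
    fun i hi j hj k hk l hl => h5 i (hWV hi) j (hWV hj) k (hWV hk) l (hWV hl)⟩

def DecompOn (V : Finset (Fin n)) (d : Fin n → Fin n → ℝ) : Prop :=
  ∃ lam : Finset (Fin n) → ℝ, (∀ S, 0 ≤ lam S) ∧ (∀ S, lam S ≠ 0 → S ⊆ V) ∧
    ∀ i ∈ V, ∀ j ∈ V, d i j = ∑ S : Finset (Fin n), lam S * cutVec S i j

lemma push_sum (f : Finset (Fin n) → Finset (Fin n)) (lam : Finset (Fin n) → ℝ)
    (c : Finset (Fin n) → ℝ) :
    ∑ T : Finset (Fin n), (∑ S ∈ Finset.univ.filter (fun S => f S = T), lam S) * c T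
      = ∑ S : Finset (Fin n), lam S * c (f S) := by
  rw [← Finset.sum_fiberwise_of_maps_to (g := f) (t := Finset.univ)
    (fun x _ => Finset.mem_univ (f x)) (fun S => lam S * c (f S))]
  refine Finset.sum_congr rfl (fun T _ => ?_)
  rw [Finset.sum_mul]
  refine Finset.sum_congr rfl (fun S hS => ?_)
  rw [(Finset.mem_filter.mp hS).2]

lemma sum_symm (lam : Finset (Fin n) → ℝ) (i j : Fin n) :
    ∑ S : Finset (Fin n), lam S * cutVec S i j = ∑ S : Finset (Fin n), lam S * cutVec S j i :=
  Finset.sum_congr rfl (fun S _ => by rw [cutVec_symm])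


lemma merge {V : Finset (Fin n)} {d : Fin n → Fin n → ℝ} (hd : TreeOn V d)
    {x y : Fin n} (hx : x ∈ V) (hy : y ∈ V) (hxy : x ≠ y) (h0 : d x y = 0)
    (h : DecompOn (V.erase x) d) : DecompOn V d := by
  obtain ⟨hsymm, hdiag, hnn, htri, hfour⟩ := hd
  obtain ⟨lam, hl0, hls, hlsum⟩ := h
  set f : Finset (Fin n) → Finset (Fin n) := fun S => if y ∈ S then insert x S else S with hf
  have hfmem : ∀ (S : Finset (Fin n)) (a : Fin n), a ≠ x → (a ∈ f S ↔ a ∈ S) := by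
    intro S a ha
    by_cases hyS : y ∈ S <;> simp [hf, hyS, Finset.mem_insert, ha]
  have hfx : ∀ (S : Finset (Fin n)), x ∉ S → (x ∈ f S ↔ y ∈ S) := by
    intro S hxS
    by_cases hyS : y ∈ S <;> simp [hf, hyS, Finset.mem_insert, hxS]
  refine ⟨fun T => ∑ S ∈ Finset.univ.filter (fun S => f S = T), lam S, ?_, ?_, ?_⟩
  · intro T; exact Finset.sum_nonneg fun S _ => hl0 S
  · intro T hT
    obtain ⟨S, hS, hSne⟩ := Finset.exists_ne_zero_of_sum_ne_zero hT
    have hSV : S ⊆ V.erase x := hls S hSne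
    have hfT : f S = T := (Finset.mem_filter.mp hS).2
    rw [← hfT]
    intro a ha
    by_cases hax : a = x
    · exact hax ▸ hx
    · exact Finset.mem_of_mem_erase (hSV ((hfmem S a hax).mp ha))
  · -- main sum identity
    have key : ∀ j ∈ V, j ≠ x →
        d x j = ∑ S : Finset (Fin n), lam S * cutVec (f S) x j := by
      intro j hj hjx
      have hterm : ∀ S : Finset (Fin n),
          lam S * cutVec (f S) x j = lam S * cutVec S y j := by
        intro S
        by_cases hS : lam S = 0
        · simp [hS]
        · have hSV : S ⊆ V.erase x := hls S hS
          have hxS : x ∉ S := fun hmem => (Finset.mem_erase.mp (hSV hmem)).1 rfl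
          congr 1
          exact cutVec_congr (hfx S hxS) (hfmem S j hjx)
      rw [Finset.sum_congr rfl (fun S _ => hterm S)]
      by_cases hjy : j = y
      · subst hjy
        rw [h0]
        exact (Finset.sum_eq_zero (fun S _ => by rw [cutVec_diag, mul_zero])).symm
      · have hyj : y ∈ V.erase x := Finset.mem_erase.mpr ⟨fun h => hxy h.symm, hy⟩
        have hjj : j ∈ V.erase x := Finset.mem_erase.mpr ⟨hjx, hj⟩
        have h1 : d x j ≤ d x y + d j y := htri x hx j hj y hy (Ne.symm hjx) hxy hjy
        have h2 : d y j ≤ d y x + d j x :=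
          htri y hy j hj x hx (fun h => hjy h.symm) (Ne.symm hxy) hjx
        have hyx0 : d y x = 0 := by rw [← hsymm]; exact h0
        have hjxyx : d y j = d x j := by
          have e1 : d j y = d y j := hsymm j y
          have e2 : d j x = d x j := hsymm j x
          linarith
        rw [← hlsum y hyj j hjj, hjxyx]
    intro i hi j hj
    rw [push_sum]
    by_cases hix : i = x <;> by_cases hjx : j = x
    · subst hix; subst hjx
      rw [hdiag]
      exact (Finset.sum_eq_zero (fun S _ => by rw [cutVec_diag, mul_zero])).symm
    · subst hix
      exact key j hj hjx
    · rw [hjx, hsymm i x, key i hi hix]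
      exact Finset.sum_congr rfl (fun S _ => by rw [cutVec_symm])
    · -- both in erase
      have hterm : ∀ S : Finset (Fin n),
          lam S * cutVec (f S) i j = lam S * cutVec S i j := by
        intro S
        congr 1
        exact cutVec_congr (hfmem S i hix) (hfmem S j hjx)
      rw [Finset.sum_congr rfl (fun S _ => hterm S)]
      exact hlsum i (Finset.mem_erase.mpr ⟨hix, hi⟩) j (Finset.mem_erase.mpr ⟨hjx, hj⟩)


lemma glue {A B : Finset (Fin n)} {x : Fin n} {d : Fin n → Fin n → ℝ}
    (hx : x ∈ A) (hdisj : Disjoint A B)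
    (hdsymm : ∀ i j, d i j = d j i)
    (hcross : ∀ k ∈ A, ∀ l ∈ B, d k l = d k x + d x l)
    (hA : DecompOn A d) (hB : DecompOn (insert x B) d) : DecompOn (A ∪ B) d := by
  obtain ⟨lamA, hA0, hAs, hAd⟩ := hA
  obtain ⟨lamB, hB0, hBs, hBd⟩ := hB
  set fA : Finset (Fin n) → Finset (Fin n) := fun S => if x ∈ S then S ∪ B else S with hfA
  set fB : Finset (Fin n) → Finset (Fin n) := fun T => if x ∈ T then T ∪ A else T with hfB
  -- membership lemmas
  have hA1 : ∀ (S : Finset (Fin n)), S ⊆ A → ∀ k ∈ A, (k ∈ fA S ↔ k ∈ S) := by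
    intro S hS k hk
    have hkB : k ∉ B := fun hkB => (Finset.disjoint_left.mp hdisj hk) hkB
    by_cases hxS : x ∈ S <;> simp [hfA, hxS, Finset.mem_union, hkB]
  have hA2 : ∀ (S : Finset (Fin n)), S ⊆ A → ∀ l ∈ B, (l ∈ fA S ↔ x ∈ S) := by
    intro S hS l hl
    have hlS : l ∉ S := fun hlS => (Finset.disjoint_left.mp hdisj (hS hlS)) hl
    by_cases hxS : x ∈ S <;> simp [hfA, hxS, Finset.mem_union, hlS, hl]
  have hB1 : ∀ (T : Finset (Fin n)), T ⊆ insert x B → ∀ k ∈ A, (k ∈ fB T ↔ x ∈ T) := by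
    intro T hT k hk
    by_cases hxT : x ∈ T
    · simp [hfB, hxT, Finset.mem_union, hk]
    · simp only [hfB]
      rw [if_neg hxT]
      simp only [hxT, iff_false]
      intro hkT
      rcases Finset.mem_insert.mp (hT hkT) with rfl | hkB
      · exact hxT hkT
      · exact (Finset.disjoint_left.mp hdisj hk) hkB
  have hB2 : ∀ (T : Finset (Fin n)), T ⊆ insert x B → ∀ l ∈ B, (l ∈ fB T ↔ l ∈ T) := by
    intro T hT l hl
    have hlA : l ∉ A := fun h => (Finset.disjoint_left.mp hdisj h) hl
    by_cases hxT : x ∈ T <;> simp [hfB, hxT, Finset.mem_union, hlA]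
  refine ⟨fun T => (∑ S ∈ Finset.univ.filter (fun S => fA S = T), lamA S)
      + (∑ S ∈ Finset.univ.filter (fun S => fB S = T), lamB S), ?_, ?_, ?_⟩
  · intro T
    exact add_nonneg (Finset.sum_nonneg fun S _ => hA0 S) (Finset.sum_nonneg fun S _ => hB0 S)
  · intro T hT
    have : (∑ S ∈ Finset.univ.filter (fun S => fA S = T), lamA S) ≠ 0 ∨
        (∑ S ∈ Finset.univ.filter (fun S => fB S = T), lamB S) ≠ 0 := by
      by_contra hc
      push_neg at hc
      refine hT ?_
      show (∑ S ∈ Finset.univ.filter (fun S => fA S = T), lamA S)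
          + (∑ S ∈ Finset.univ.filter (fun S => fB S = T), lamB S) = 0
      rw [hc.1, hc.2, add_zero]
    rcases this with hne | hne
    · obtain ⟨S, hS, hSne⟩ := Finset.exists_ne_zero_of_sum_ne_zero hne
      have hSA : S ⊆ A := hAs S hSne
      rw [← (Finset.mem_filter.mp hS).2]
      simp only [hfA]
      split
      · exact Finset.union_subset_union hSA (Finset.Subset.refl B)
      · exact hSA.trans Finset.subset_union_left
    · obtain ⟨S, hS, hSne⟩ := Finset.exists_ne_zero_of_sum_ne_zero hne
      have hSB : S ⊆ insert x B := hBs S hSne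
      have hSB' : S ⊆ A ∪ B := by
        intro a ha
        rcases Finset.mem_insert.mp (hSB ha) with rfl | h
        · exact Finset.mem_union_left _ hx
        · exact Finset.mem_union_right _ h
      rw [← (Finset.mem_filter.mp hS).2]
      simp only [hfB]
      split
      · exact Finset.union_subset hSB' Finset.subset_union_left
      · exact hSB'
  · -- sum identity
    have main : ∀ i ∈ A ∪ B, ∀ j ∈ A ∪ B,
        (∑ S : Finset (Fin n), lamA S * cutVec (fA S) i j)
          + (∑ S : Finset (Fin n), lamB S * cutVec (fB S) i j) = d i j := by
      have core : ∀ i ∈ A ∪ B, ∀ j ∈ A ∪ B, (i ∈ A → j ∈ A → True) →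
          True := fun _ _ _ _ _ => trivial
      intro i hi j hj
      rcases Finset.mem_union.mp hi with hiA | hiB <;>
        rcases Finset.mem_union.mp hj with hjA | hjB
      · -- both in A
        have e1 : ∀ S : Finset (Fin n), lamA S * cutVec (fA S) i j = lamA S * cutVec S i j := by
          intro S
          by_cases hS : lamA S = 0
          · simp [hS]
          · exact congrArg _ (cutVec_congr (hA1 S (hAs S hS) i hiA) (hA1 S (hAs S hS) j hjA))
        have e2 : ∀ S : Finset (Fin n), lamB S * cutVec (fB S) i j = 0 := by
          intro S
          by_cases hS : lamB S = 0
          · simp [hS]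
          · have h1 := hB1 S (hBs S hS) i hiA
            have h2 := hB1 S (hBs S hS) j hjA
            have : cutVec (fB S) i j = 0 := by
              unfold cutVec
              rw [if_pos (h1.trans h2.symm)]
            rw [this, mul_zero]
        rw [Finset.sum_congr rfl fun S _ => e1 S, Finset.sum_congr rfl fun S _ => e2 S,
          Finset.sum_const_zero, add_zero, ← hAd i hiA j hjA]
      · -- i ∈ A, j ∈ B
        have e1 : ∀ S : Finset (Fin n), lamA S * cutVec (fA S) i j = lamA S * cutVec S i x := by
          intro S
          by_cases hS : lamA S = 0
          · simp [hS]
          · exact congrArg _ (cutVec_congr (hA1 S (hAs S hS) i hiA) (hA2 S (hAs S hS) j hjB))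
        have e2 : ∀ S : Finset (Fin n), lamB S * cutVec (fB S) i j = lamB S * cutVec S x j := by
          intro S
          by_cases hS : lamB S = 0
          · simp [hS]
          · exact congrArg _ (cutVec_congr (hB1 S (hBs S hS) i hiA) (hB2 S (hBs S hS) j hjB))
        rw [Finset.sum_congr rfl fun S _ => e1 S, Finset.sum_congr rfl fun S _ => e2 S,
          ← hAd i hiA x hx, ← hBd x (Finset.mem_insert_self x B) j (Finset.mem_insert_of_mem hjB),
          ← hcross i hiA j hjB]
      · -- i ∈ B, j ∈ A : use symmetry
        have e1 : ∀ S : Finset (Fin n), lamA S * cutVec (fA S) i j = lamA S * cutVec S x j := by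
          intro S
          by_cases hS : lamA S = 0
          · simp [hS]
          · exact congrArg _ (cutVec_congr (hA2 S (hAs S hS) i hiB) (hA1 S (hAs S hS) j hjA))
        have e2 : ∀ S : Finset (Fin n), lamB S * cutVec (fB S) i j = lamB S * cutVec S i x := by
          intro S
          by_cases hS : lamB S = 0
          · simp [hS]
          · exact congrArg _ (cutVec_congr (hB2 S (hBs S hS) i hiB) (hB1 S (hBs S hS) j hjA))
        rw [Finset.sum_congr rfl fun S _ => e1 S, Finset.sum_congr rfl fun S _ => e2 S,
          ← hAd x hx j hjA, ← hBd i (Finset.mem_insert_of_mem hiB) x (Finset.mem_insert_self x B)]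
        rw [hdsymm i j, hcross j hjA i hiB, hdsymm j x, hdsymm x i]
      · -- both in B
        have e1 : ∀ S : Finset (Fin n), lamA S * cutVec (fA S) i j = 0 := by
          intro S
          by_cases hS : lamA S = 0
          · simp [hS]
          · have h1 := hA2 S (hAs S hS) i hiB
            have h2 := hA2 S (hAs S hS) j hjB
            have : cutVec (fA S) i j = 0 := by
              unfold cutVec
              rw [if_pos (h1.trans h2.symm)]
            rw [this, mul_zero]
        have e2 : ∀ S : Finset (Fin n), lamB S * cutVec (fB S) i j = lamB S * cutVec S i j := by
          intro S
          by_cases hS : lamB S = 0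
          · simp [hS]
          · exact congrArg _ (cutVec_congr (hB2 S (hBs S hS) i hiB) (hB2 S (hBs S hS) j hjB))
        rw [Finset.sum_congr rfl fun S _ => e1 S, Finset.sum_congr rfl fun S _ => e2 S,
          Finset.sum_const_zero, zero_add,
          ← hBd i (Finset.mem_insert_of_mem hiB) j (Finset.mem_insert_of_mem hjB)]
    intro i hi j hj
    have expand : ∑ T : Finset (Fin n),
        ((∑ S ∈ Finset.univ.filter (fun S => fA S = T), lamA S)
          + (∑ S ∈ Finset.univ.filter (fun S => fB S = T), lamB S)) * cutVec T i j
        = (∑ S : Finset (Fin n), lamA S * cutVec (fA S) i j)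
          + (∑ S : Finset (Fin n), lamB S * cutVec (fB S) i j) := by
      rw [← push_sum fA lamA (fun T => cutVec T i j), ← push_sum fB lamB (fun T => cutVec T i j),
        ← Finset.sum_add_distrib]
      exact Finset.sum_congr rfl fun T _ => (add_mul _ _ _)
    rw [expand, main i hi j hj]


lemma split {V : Finset (Fin n)} {d : Fin n → Fin n → ℝ} (hd : TreeOn V d)
    {x b0 : Fin n} (hx : x ∈ V) (hb : b0 ∈ V) (hxb : x ≠ b0) (hb0 : d x b0 ≠ 0) :
    x ∈ V.filter (fun k => d k b0 = d k x + d x b0) ∧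
    b0 ∉ V.filter (fun k => d k b0 = d k x + d x b0) ∧
    ∀ k ∈ V.filter (fun k => d k b0 = d k x + d x b0),
      ∀ l ∈ V \ V.filter (fun k => d k b0 = d k x + d x b0),
        d k l = d k x + d x l := by
  obtain ⟨hsymm, hdiag, hnn, htri, hfour⟩ := hd
  set A := V.filter (fun k => d k b0 = d k x + d x b0) with hA
  have hxA : x ∈ A := by
    rw [hA, Finset.mem_filter]
    exact ⟨hx, by rw [hdiag, zero_add]⟩
  have hbA : b0 ∉ A := by
    rw [hA, Finset.mem_filter]
    rintro ⟨-, habs⟩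
    rw [hdiag, hsymm b0 x] at habs
    exact hb0 (by linarith)
  refine ⟨hxA, hbA, ?_⟩
  intro k hk l hl
  obtain ⟨hkV, hk2⟩ := Finset.mem_filter.mp hk
  obtain ⟨hlV, hlA⟩ := Finset.mem_sdiff.mp hl
  have hl2 : d l b0 ≠ d l x + d x b0 := by
    intro h
    exact hlA (Finset.mem_filter.mpr ⟨hlV, h⟩)
  by_cases hkx : k = x
  · subst hkx
    rw [hdiag, zero_add]
  by_cases hlb : l = b0
  · subst hlb
    exact hk2
  have hkb : k ≠ b0 := fun h => hbA (h ▸ hk)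
  have hlx : l ≠ x := fun h => hlA (h ▸ hxA)
  have hkl : k ≠ l := fun h => hlA (h ▸ hk)
  have hstrict : d l b0 < d l x + d x b0 := by
    have h1 : d l b0 ≤ d l x + d b0 x := htri l hlV b0 hb x hx hlb hlx (Ne.symm hxb)
    rw [hsymm b0 x] at h1
    exact lt_of_le_of_ne h1 hl2
  have h4 := hfour k hkV l hlV x hx b0 hb hkl hkx hkb hlx hlb hxb
  have hsl : d l x = d x l := hsymm l x
  rcases h4 with ⟨he, hle⟩ | ⟨he, hle⟩ | ⟨he, hle⟩
  · linarith
  · linarith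
  · linarith


lemma cutVec_single_ne {x a b : Fin n} (ha : a ≠ x) (hb : b ≠ x) : cutVec {x} a b = 0 := by
  simp [cutVec, ha, hb]

lemma cutVec_single_left {x b : Fin n} (hb : b ≠ x) : cutVec {x} x b = 1 := by
  simp [cutVec, hb]

lemma cutVec_single_right {x a : Fin n} (ha : a ≠ x) : cutVec {x} a x = 1 := by
  simp [cutVec, ha]

lemma peel {V : Finset (Fin n)} {d : Fin n → Fin n → ℝ} (hd : TreeOn V d)
    {x : Fin n} (hx : x ∈ V) (hcard : 3 ≤ V.card) {t : ℝ}
    (hmin : ∀ a ∈ V.erase x, ∀ b ∈ V.erase x, a ≠ b → 2 * t ≤ d x a + d x b - d a b) :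
    TreeOn V (fun i j => d i j - t * cutVec {x} i j) := by
  obtain ⟨hsymm, hdiag, hnn, htri, hfour⟩ := hd
  -- auxiliary: t ≤ d x j for j ∈ V.erase x
  have htle : ∀ j ∈ V.erase x, t ≤ d x j := by
    intro j hj
    obtain ⟨hjx, hjV⟩ := Finset.mem_erase.mp hj
    have hne : ((V.erase x).erase j).Nonempty := by
      rw [← Finset.card_pos]
      have h1 : V.card - 2 ≤ ((V.erase x).erase j).card := by
        rw [Finset.card_erase_of_mem hj, Finset.card_erase_of_mem hx]
        omega
      omega
    obtain ⟨b, hb⟩ := hne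
    obtain ⟨hbj, hb'⟩ := Finset.mem_erase.mp hb
    obtain ⟨hbx, hbV⟩ := Finset.mem_erase.mp hb'
    have h1 : 2 * t ≤ d x j + d x b - d j b := hmin j hj b hb' (Ne.symm hbj)
    have h2 : d x b ≤ d x j + d b j :=
      htri x hx b hbV j hjV (Ne.symm hbx) (Ne.symm hjx) hbj
    have h3 : d b j = d j b := hsymm b j
    linarith
  refine ⟨?_, ?_, ?_, ?_, ?_⟩
  · intro i j
    simp only
    rw [hsymm i j, cutVec_symm]
  · intro i
    simp only
    rw [hdiag, cutVec_diag, mul_zero, sub_zero]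
  · -- nonneg
    intro i hi j hj hij
    simp only
    by_cases hix : i = x
    · subst hix
      rw [cutVec_single_left (Ne.symm hij), mul_one, sub_nonneg]
      exact htle j (Finset.mem_erase.mpr ⟨Ne.symm hij, hj⟩)
    · by_cases hjx : j = x
      · subst hjx
        rw [cutVec_single_right hix, mul_one, sub_nonneg, hsymm i j]
        exact htle i (Finset.mem_erase.mpr ⟨hix, hi⟩)
      · rw [cutVec_single_ne hix hjx, mul_zero, sub_zero]
        exact hnn i hi j hj hij
  · -- triangle
    intro i hi j hj k hk hij hik hjk
    simp only
    by_cases hix : i = x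
    · subst hix
      rw [cutVec_single_left (Ne.symm hij), cutVec_single_left (Ne.symm hik),
        cutVec_single_ne (Ne.symm hij) (Ne.symm hik), mul_zero, sub_zero]
      have := htri i hi j hj k hk hij hik hjk
      linarith
    · by_cases hjx : j = x
      · subst hjx
        rw [cutVec_single_right hix, cutVec_single_ne hix (Ne.symm hjk), mul_zero, sub_zero,
          cutVec_single_left (Ne.symm hjk)]
        have := htri i hi j hj k hk hij hik hjk
        linarith
      · by_cases hkx : k = x
        · subst hkx
          rw [cutVec_single_ne hix hjx, mul_zero, sub_zero, cutVec_single_right hix,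
            cutVec_single_right hjx]
          have h1 := hmin i (Finset.mem_erase.mpr ⟨hix, hi⟩) j (Finset.mem_erase.mpr ⟨hjx, hj⟩) hij
          have h2 : d k i = d i k := hsymm k i
          have h3 : d k j = d j k := hsymm k j
          linarith
        · rw [cutVec_single_ne hix hjx, cutVec_single_ne hix hkx, cutVec_single_ne hjx hkx]
          have := htri i hi j hj k hk hij hik hjk
          linarith
  · -- four point
    intro i hi j hj k hk l hl hij hik hil hjk hjl hkl
    simp only
    have hIe : ∀ a b : Fin n, a ≠ b →
        cutVec {x} a b = (if a = x then (1:ℝ) else 0) + (if b = x then 1 else 0) :=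
      fun a b hab => cutVec_singleton hab
    rw [hIe i j hij, hIe k l hkl, hIe i k hik, hIe j l hjl, hIe i l hil, hIe j k hjk]
    rcases hfour i hi j hj k hk l hl hij hik hil hjk hjl hkl with ⟨he, hle⟩ | ⟨he, hle⟩ | ⟨he, hle⟩
    · exact Or.inl ⟨by ring_nf; linarith, by ring_nf; linarith⟩
    · exact Or.inr (Or.inl ⟨by ring_nf; linarith, by ring_nf; linarith⟩)
    · exact Or.inr (Or.inr ⟨by ring_nf; linarith, by ring_nf; linarith⟩)


lemma sum_indicator (c : ℝ) (S0 : Finset (Fin n)) (g : Finset (Fin n) → ℝ) :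
    ∑ S : Finset (Fin n), (if S = S0 then c else 0) * g S = c * g S0 := by
  rw [Finset.sum_eq_single_of_mem S0 (Finset.mem_univ S0)]
  · rw [if_pos rfl]
  · intro S _ hS
    rw [if_neg hS, zero_mul]

lemma unpeel {V : Finset (Fin n)} {d : Fin n → Fin n → ℝ} {x : Fin n} {t : ℝ}
    (ht : 0 ≤ t) (hxV : x ∈ V)
    (h : DecompOn V (fun i j => d i j - t * cutVec {x} i j)) : DecompOn V d := by
  obtain ⟨lam, h0, hs, hsum⟩ := h
  refine ⟨fun S => lam S + (if S = {x} then t else 0), ?_, ?_, ?_⟩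
  · intro S
    refine add_nonneg (h0 S) ?_
    split
    · exact ht
    · exact le_refl 0
  · intro S hS
    by_cases hSx : S = {x}
    · subst hSx
      exact Finset.singleton_subset_iff.mpr hxV
    · refine hs S ?_
      simpa [hSx] using hS
  · intro i hi j hj
    have expand : ∑ S : Finset (Fin n), (lam S + (if S = {x} then t else 0)) * cutVec S i j
        = (∑ S : Finset (Fin n), lam S * cutVec S i j) + t * cutVec {x} i j := by
      rw [← sum_indicator t {x} (fun S => cutVec S i j), ← Finset.sum_add_distrib]
      exact Finset.sum_congr rfl fun S _ => (add_mul _ _ _)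
    rw [expand, ← hsum i hi j hj]
    simp only
    ring

theorem decompOn_of_treeOn (V : Finset (Fin n)) :
    ∀ d : Fin n → Fin n → ℝ, TreeOn V d → DecompOn V d := by
  induction V using Finset.strongInduction with
  | _ V ih =>
  intro d hd
  obtain ⟨hsymm, hdiag, hnn, htri, hfour⟩ := id hd
  by_cases hc1 : V.card ≤ 1
  · refine ⟨fun _ => 0, fun _ => le_refl 0, fun S hS => absurd rfl hS, ?_⟩
    intro i hi j hj
    have hij : i = j := by
      by_contra hne
      have : 1 < V.card := Finset.one_lt_card.mpr ⟨i, hi, j, hj, hne⟩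
      omega
    subst hij
    rw [hdiag]
    exact (Finset.sum_eq_zero fun S _ => by rw [cutVec_diag, mul_zero]).symm
  by_cases hc2 : V.card = 2
  · obtain ⟨a, b, hab, hV⟩ := Finset.card_eq_two.mp hc2
    have haV : a ∈ V := by rw [hV]; exact Finset.mem_insert_self a {b}
    have hbV : b ∈ V := by rw [hV]; exact Finset.mem_insert_of_mem (Finset.mem_singleton_self b)
    refine ⟨fun S => if S = {a} then d a b else 0, ?_, ?_, ?_⟩
    · intro S
      dsimp only
      split
      · exact hnn a haV b hbV hab
      · exact le_refl 0
    · intro S hS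
      by_cases hSa : S = {a}
      · subst hSa
        exact Finset.singleton_subset_iff.mpr haV
      · simp [hSa] at hS
    · intro i hi j hj
      rw [sum_indicator (d a b) {a} (fun S => cutVec S i j)]
      rw [hV] at hi hj
      rcases Finset.mem_insert.mp hi with rfl | hi' <;>
        rcases Finset.mem_insert.mp hj with rfl | hj'
      · rw [hdiag, cutVec_diag, mul_zero]
      · rw [Finset.mem_singleton.mp hj']
        rw [cutVec_single_left (Ne.symm hab), mul_one]
      · rw [Finset.mem_singleton.mp hi']
        rw [cutVec_single_right (Ne.symm hab), mul_one, hsymm b j]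
      · rw [Finset.mem_singleton.mp hi', Finset.mem_singleton.mp hj']
        rw [cutVec_diag, mul_zero, hdiag]
  · -- |V| ≥ 3
    have hc3 : 3 ≤ V.card := by omega
    have hVne : V.Nonempty := Finset.card_pos.mp (show 0 < V.card by omega)
    obtain ⟨x, hx⟩ := hVne
    set W := V.erase x with hW
    have hWcard : 2 ≤ W.card := by
      rw [hW, Finset.card_erase_of_mem hx]
      omega
    obtain ⟨a, ha, b, hb, hab⟩ := Finset.one_lt_card.mp (show 1 < W.card by omega)
    set P := (W ×ˢ W).filter (fun p => p.1 ≠ p.2) with hP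
    have hPne : P.Nonempty := by
      refine ⟨(a, b), ?_⟩
      rw [hP, Finset.mem_filter, Finset.mem_product]
      exact ⟨⟨ha, hb⟩, hab⟩
    obtain ⟨p0, hp0P, hp0min⟩ :=
      Finset.exists_min_image P (fun p => d x p.1 + d x p.2 - d p.1 p.2) hPne
    obtain ⟨hp0W, hp0ne⟩ := Finset.mem_filter.mp hp0P
    obtain ⟨ha0, hb0⟩ := Finset.mem_product.mp hp0W
    set a0 := p0.1
    set b0 := p0.2
    have ha0x : a0 ≠ x := (Finset.mem_erase.mp ha0).1
    have hb0x : b0 ≠ x := (Finset.mem_erase.mp hb0).1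
    have ha0V : a0 ∈ V := (Finset.mem_erase.mp ha0).2
    have hb0V : b0 ∈ V := (Finset.mem_erase.mp hb0).2
    set t := (d x a0 + d x b0 - d a0 b0) / 2 with hT
    have hmin : ∀ u ∈ W, ∀ v ∈ W, u ≠ v → 2 * t ≤ d x u + d x v - d u v := by
      intro u hu v hv huv
      have h := hp0min (u, v) (by
        rw [hP, Finset.mem_filter, Finset.mem_product]
        exact ⟨⟨hu, hv⟩, huv⟩)
      simp only at h
      rw [hT]
      linarith
    have ht0 : 0 ≤ t := by
      have h1 : d a0 b0 ≤ d a0 x + d b0 x :=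
        htri a0 ha0V b0 hb0V x hx hp0ne ha0x hb0x
      have h2 : d a0 x = d x a0 := hsymm a0 x
      have h3 : d b0 x = d x b0 := hsymm b0 x
      rw [hT]
      linarith
    set d' : Fin n → Fin n → ℝ := fun i j => d i j - t * cutVec {x} i j with hd'def
    have hd' : TreeOn V d' := peel hd hx hc3 hmin
    have hd'xa0 : d' x a0 = d x a0 - t := by
      rw [hd'def]
      simp only
      rw [cutVec_single_left ha0x, mul_one]
    have hd'xb0 : d' x b0 = d x b0 - t := by
      rw [hd'def]
      simp only
      rw [cutVec_single_left hb0x, mul_one]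
    have hd'ab : d' a0 b0 = d a0 b0 := by
      rw [hd'def]
      simp only
      rw [cutVec_single_ne ha0x hb0x, mul_zero, sub_zero]
    have hbet : d' x a0 + d' x b0 = d' a0 b0 := by
      rw [hd'xa0, hd'xb0, hd'ab, hT]
      ring
    have hVd' : DecompOn V d' := by
      by_cases hzero : d' x b0 = 0
      · -- merge x with b0
        have hsub : DecompOn (V.erase x) d' :=
          ih (V.erase x) (Finset.erase_ssubset hx) d' (hd'.mono (Finset.erase_subset x V))
        exact merge hd' hx hb0V (Ne.symm hb0x) hzero hsub
      · -- split
        obtain ⟨hxA, hbA, hcross⟩ := split hd' hx hb0V (Ne.symm hb0x) hzero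
        set A := V.filter (fun k => d' k b0 = d' k x + d' x b0) with hAdef
        set B := V \ A with hBdef
        have hAsub : A ⊆ V := Finset.filter_subset _ V
        have hAss : A ⊂ V :=
          (Finset.ssubset_iff_of_subset hAsub).mpr ⟨b0, hb0V, hbA⟩
        have haA : a0 ∈ A := by
          rw [hAdef, Finset.mem_filter]
          refine ⟨ha0V, ?_⟩
          rw [hd'.1 a0 x, ← hbet]
        have hBsubV : insert x B ⊆ V := by
          refine Finset.insert_subset hx ?_
          rw [hBdef]
          exact Finset.sdiff_subset
        have hBss : insert x B ⊂ V := by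
          refine (Finset.ssubset_iff_of_subset hBsubV).mpr ⟨a0, ha0V, ?_⟩
          intro hmem
          rcases Finset.mem_insert.mp hmem with h | h
          · exact ha0x h
          · rw [hBdef, Finset.mem_sdiff] at h
            exact h.2 haA
        have hdecA : DecompOn A d' := ih A hAss d' (hd'.mono hAsub)
        have hdecB : DecompOn (insert x B) d' := ih (insert x B) hBss d' (hd'.mono hBsubV)
        have hdisj : Disjoint A B := by
          rw [hBdef]
          exact Finset.disjoint_sdiff
        have hcross' : ∀ k ∈ A, ∀ l ∈ B, d' k l = d' k x + d' x l := hcross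
        have := glue hxA hdisj hd'.1 hcross' hdecA hdecB
        rwa [Finset.union_sdiff_of_subset hAsub] at this
    exact unpeel ht0 hx hVd'


end TreeDecomp

open TreeDecomp

theorem convexHull_treeMetrics_eq_cutCone (n : ℕ) (hn : 1 ≤ n) :
    convexHull ℝ (treeMetricSet n) =
      {w : Fin n → Fin n → ℝ | ∃ lam : Finset (Fin n) → ℝ,
        (∀ S, 0 ≤ lam S) ∧ w = ∑ S : Finset (Fin n), lam S • cutVec S} := by
  set C : Set (Fin n → Fin n → ℝ) := {w : Fin n → Fin n → ℝ | ∃ lam : Finset (Fin n) → ℝ,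
        (∀ S, 0 ≤ lam S) ∧ w = ∑ S : Finset (Fin n), lam S • cutVec S} with hC
  have happ : ∀ (lam : Finset (Fin n) → ℝ) (i j : Fin n),
      (∑ S : Finset (Fin n), lam S • cutVec S) i j = ∑ S : Finset (Fin n), lam S * cutVec S i j := by
    intro lam i j
    rw [Finset.sum_apply, Finset.sum_apply]
    exact Finset.sum_congr rfl fun S _ => rfl
  -- scaled cut vectors are tree metrics
  have hscaled : ∀ (c : ℝ), 0 ≤ c → ∀ S : Finset (Fin n), c • cutVec S ∈ treeMetricSet n := by
    intro c hc S
    refine ⟨?_, ?_, ?_, ?_, ?_⟩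
    · intro i j
      show c * cutVec S i j = c * cutVec S j i
      rw [cutVec_symm]
    · intro i
      show c * cutVec S i i = 0
      rw [cutVec_diag, mul_zero]
    · intro i j _
      exact mul_nonneg hc (cutVec_nonneg S i j)
    · intro i j k _ _ _
      show c * cutVec S i j ≤ c * cutVec S i k + c * cutVec S j k
      by_cases hi : i ∈ S <;> by_cases hj : j ∈ S <;> by_cases hk : k ∈ S <;>
        simp [cutVec, hi, hj, hk] <;> linarith
    · intro i j k l _ _ _ _ _ _
      show (c * cutVec S i j + c * cutVec S k l = c * cutVec S i k + c * cutVec S j l ∧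
            c * cutVec S i l + c * cutVec S j k ≤ c * cutVec S i j + c * cutVec S k l) ∨
          (c * cutVec S i j + c * cutVec S k l = c * cutVec S i l + c * cutVec S j k ∧
            c * cutVec S i k + c * cutVec S j l ≤ c * cutVec S i j + c * cutVec S k l) ∨
          (c * cutVec S i k + c * cutVec S j l = c * cutVec S i l + c * cutVec S j k ∧
            c * cutVec S i j + c * cutVec S k l ≤ c * cutVec S i k + c * cutVec S j l)
      by_cases hi : i ∈ S <;> by_cases hj : j ∈ S <;> by_cases hk : k ∈ S <;>
          by_cases hl : l ∈ S <;>
        simp [cutVec, hi, hj, hk, hl] <;>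
        first
          | linarith
          | (left; linarith)
          | (right; linarith)
          | (left; constructor <;> linarith)
          | (right; left; linarith)
          | (right; right; linarith)
          | (right; left; constructor <;> linarith)
          | (right; right; constructor <;> linarith)
  have hconv : Convex ℝ C := by
    rintro w1 ⟨lam1, hl1, hw1⟩ w2 ⟨lam2, hl2, hw2⟩ a b ha hb hab
    refine ⟨fun S => a * lam1 S + b * lam2 S,
      fun S => add_nonneg (mul_nonneg ha (hl1 S)) (mul_nonneg hb (hl2 S)), ?_⟩
    rw [hw1, hw2, Finset.smul_sum, Finset.smul_sum, ← Finset.sum_add_distrib]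
    refine Finset.sum_congr rfl fun S _ => ?_
    rw [add_smul, smul_smul, smul_smul]
  apply Set.Subset.antisymm
  · refine convexHull_min ?_ hconv
    intro q hq
    obtain ⟨h1, h2, h3, h4, h5⟩ := hq
    have htree : TreeOn Finset.univ q :=
      ⟨h1, h2, fun i _ j _ => h3 i j, fun i _ j _ k _ => h4 i j k,
        fun i _ j _ k _ l _ => h5 i j k l⟩
    obtain ⟨lam, hl0, _, hsum⟩ := decompOn_of_treeOn Finset.univ q htree
    refine ⟨lam, hl0, ?_⟩
    funext i j
    rw [happ]
    exact hsum i (Finset.mem_univ i) j (Finset.mem_univ j)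
  · rintro w ⟨lam, hl0, hw⟩
    have hN : (0:ℝ) < (2:ℝ) ^ n := by positivity
    have hcard : (Finset.univ : Finset (Finset (Fin n))).card = 2 ^ n := by
      rw [Finset.card_univ, Fintype.card_finset, Fintype.card_fin]
    have hsum1 : ∑ _S : Finset (Fin n), ((2:ℝ)^n)⁻¹ = 1 := by
      rw [Finset.sum_const, hcard, nsmul_eq_mul]
      push_cast
      field_simp
    have := Finset.centerMass_mem_convexHull (t := (Finset.univ : Finset (Finset (Fin n))))
      (w := fun _ => ((2:ℝ)^n)⁻¹)
      (z := fun S => (((2:ℝ)^n) * lam S) • cutVec S)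
      (s := treeMetricSet n)
      (fun S _ => by positivity)
      (by rw [hsum1]; norm_num)
      (fun S _ => hscaled _ (mul_nonneg (le_of_lt hN) (hl0 S)) S)
    rwa [Finset.centerMass_eq_of_sum_1 _ _ hsum1, show
        (∑ S : Finset (Fin n), ((2:ℝ)^n)⁻¹ • ((((2:ℝ)^n) * lam S) • cutVec S)) = w from ?_] at this
    rw [hw]
    refine Finset.sum_congr rfl fun S _ => ?_
    rw [smul_smul, ← mul_assoc, inv_mul_cancel₀ (ne_of_gt hN), one_mul]
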